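/- Let α < 1 and let f ∈ A satisfy |α f(z)/z + (1-α) f'(z) - 1| ≤ (2-α)|z| on D (equivalently via Schwarz's lemma, ≤ 2-α with equality of the bound at the boundary). Then there exists a holomorphic self-map ω of D with ω(0)=0 such that f(z) = z(1 + ((2-α)/(1-α)) ∫₀¹ s^{α/(1-α)} ω(sz) ds), and consequently |f(z)/z - 1| ≤ 1 for all z ∈ D \ {0}. -/

import Mathlib

open Metric Complex

/-- Integral representation of the pseudo-analytic classes `𝔄¹_α`, `α < 1`: if `f ∈ A`
satisfies `|α f z / z + (1-α) f' z - 1| ≤ (2-α)|z|` on the disk, then there is a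
holomorphic self-map `ω` of the disk with `ω 0 = 0` such that
`f z = z (1 + (2-α)/(1-α) ∫₀¹ s^{α/(1-α)} ω (s z) ds)`, and consequently
`|f z / z - 1| ≤ 1` on the punctured disk. -/
theorem pseudo_analytic_integral_representation
    (α : ℝ) (hα : α < 1)
    (f : ℂ → ℂ) (hf : DifferentiableOn ℂ f (ball (0:ℂ) 1))
    (hf0 : f 0 = 0) (hf1 : deriv f 0 = 1)
    (hbound : ∀ z ∈ ball (0:ℂ) 1, z ≠ 0 →
      ‖(α : ℂ) * (f z / z) + (1 - (α:ℂ)) * deriv f z - 1‖ ≤ (2 - α) * ‖z‖) :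
    ∃ ω : ℂ → ℂ, DifferentiableOn ℂ ω (ball (0:ℂ) 1) ∧ ω 0 = 0 ∧
      (∀ z ∈ ball (0:ℂ) 1, ω z ∈ ball (0:ℂ) 1) ∧
      (∀ z ∈ ball (0:ℂ) 1,
        f z = z * (1 + ((2 - (α:ℂ)) / (1 - (α:ℂ))) *
          ∫ s in (0:ℝ)..1, ((s ^ (α / (1 - α)) : ℝ) : ℂ) * ω ((s:ℂ) * z))) ∧
      (∀ z ∈ ball (0:ℂ) 1, z ≠ 0 → ‖f z / z - 1‖ ≤ 1) := by
  have hα1 : (0:ℝ) < 1 - α := by linarith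
  have h2α : (0:ℝ) < 2 - α := by linarith
  have hA : (1 - (α:ℂ)) ≠ 0 := by
    have : ((1 - α : ℝ) : ℂ) ≠ 0 := Complex.ofReal_ne_zero.mpr (ne_of_gt hα1)
    simpa using this
  have h2A : (2 - (α:ℂ)) ≠ 0 := by
    have : ((2 - α : ℝ) : ℂ) ≠ 0 := Complex.ofReal_ne_zero.mpr (ne_of_gt h2α)
    simpa using this
  set γ : ℝ := 1 / (1 - α) with hγdef
  set β : ℝ := α / (1 - α) with hβdef
  have hγpos : 0 < γ := by positivity
  have hβγ : β = γ - 1 := by rw [hβdef, hγdef]; field_simp; ring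
  have hγc : ((γ : ℝ) : ℂ) = (1 - (α:ℂ))⁻¹ := by
    rw [hγdef]; push_cast; rw [one_div]
  -- the function g = f z / z, extended holomorphically
  set g : ℂ → ℂ := dslope f 0 with hgdef
  have hg : DifferentiableOn ℂ g (ball (0:ℂ) 1) :=
    (differentiableOn_dslope (ball_mem_nhds _ one_pos)).mpr hf
  have hgne : ∀ w : ℂ, w ≠ 0 → g w = f w / w := by
    intro w hw
    rw [hgdef, dslope_of_ne _ hw, slope_def_field, hf0]
    simp
  have hg0 : g 0 = 1 := by rw [hgdef, dslope_same, hf1]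
  have hfg : ∀ w : ℂ, f w = w * g w := by
    intro w
    rcases eq_or_ne w 0 with rfl | hw
    · simp [hf0]
    · rw [hgne w hw]; field_simp
  have hdf : DifferentiableOn ℂ (deriv f) (ball (0:ℂ) 1) :=
    ((hf.analyticOnNhd isOpen_ball).deriv).differentiableOn
  -- the Schwarz function ω
  set ω : ℂ → ℂ :=
    fun w => ((α:ℂ) * g w + (1 - (α:ℂ)) * deriv f w - 1) / (2 - (α:ℂ)) with hωdef
  have hωdiff : DifferentiableOn ℂ ω (ball (0:ℂ) 1) :=
    (((hg.const_mul _).add (hdf.const_mul _)).sub (differentiableOn_const 1)).div_const _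
  have hω0 : ω 0 = 0 := by
    rw [hωdef]; simp only [hg0, hf1]
    rw [div_eq_zero_iff]; left; ring
  have hODE : ∀ w : ℂ, (α:ℂ) * g w + (1 - (α:ℂ)) * deriv f w - 1 = (2 - (α:ℂ)) * ω w := by
    intro w; rw [hωdef]; field_simp
  have hkey : ∀ w ∈ ball (0:ℂ) 1, ‖ω w‖ ≤ ‖w‖ := by
    intro w hw
    rcases eq_or_ne w 0 with rfl | hne
    · simp [hω0]
    · have hb := hbound w hw hne
      rw [← hgne w hne] at hb
      rw [hωdef, norm_div]
      have h2n : ‖(2 - (α:ℂ))‖ = 2 - α := by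
        rw [show (2 - (α:ℂ)) = ((2 - α : ℝ) : ℂ) by push_cast; ring, Complex.norm_real,
          Real.norm_eq_abs, _root_.abs_of_pos h2α]
      rw [h2n, div_le_iff₀ h2α, mul_comm ‖w‖ (2 - α)]
      exact hb
  have hωball : ∀ z ∈ ball (0:ℂ) 1, ω z ∈ ball (0:ℂ) 1 := by
    intro z hz
    rw [mem_ball_zero_iff] at *
    exact lt_of_le_of_lt (hkey z (mem_ball_zero_iff.mpr hz)) hz
  -- relation between deriv f and g
  have hderivf : ∀ w ∈ ball (0:ℂ) 1, deriv f w = g w + w * deriv g w := by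
    intro w hw
    have hgw : HasDerivAt g (deriv g w) w :=
      (hg.differentiableAt (isOpen_ball.mem_nhds hw)).hasDerivAt
    have hfeq : f = fun w => w * g w := funext hfg
    have hd : HasDerivAt f (1 * g w + w * deriv g w) w := by
      rw [hfeq]; exact (hasDerivAt_id w).mul hgw
    rw [hd.deriv]; ring
  -- membership of the segment
  have hmemIcc : ∀ z ∈ ball (0:ℂ) 1, ∀ s ∈ Set.Icc (0:ℝ) 1, (s:ℂ) * z ∈ ball (0:ℂ) 1 := by
    intro z hz s hs
    rw [mem_ball_zero_iff] at *
    rw [norm_mul, Complex.norm_real, Real.norm_eq_abs, _root_.abs_of_nonneg hs.1]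
    calc s * ‖z‖ ≤ 1 * ‖z‖ := mul_le_mul_of_nonneg_right hs.2 (norm_nonneg z)
      _ < 1 := by rw [one_mul]; exact hz
  have hcontω : ∀ z ∈ ball (0:ℂ) 1,
      ContinuousOn (fun s : ℝ => ω ((s:ℂ) * z)) (Set.Icc (0:ℝ) 1) := by
    intro z hz
    exact hωdiff.continuousOn.comp
      ((Complex.continuous_ofReal.mul continuous_const).continuousOn) (hmemIcc z hz)
  have hsγint : IntervalIntegrable (fun s : ℝ => s ^ γ) MeasureTheory.volume 0 1 :=
    (Real.continuous_rpow_const (le_of_lt hγpos)).intervalIntegrable 0 1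
  have hsγval : (∫ s in (0:ℝ)..1, s ^ γ) = 1 / (γ + 1) := by
    rw [integral_rpow (Or.inl (by linarith : (-1:ℝ) < γ))]
    rw [Real.one_rpow, Real.zero_rpow (by positivity : γ + 1 ≠ 0)]
    ring
  have hnorm_le : ∀ z ∈ ball (0:ℂ) 1, ∀ s ∈ Set.Ioc (0:ℝ) 1,
      ‖((s ^ β : ℝ) : ℂ) * ω ((s:ℂ) * z)‖ ≤ ‖z‖ * s ^ γ := by
    intro z hz s hs
    have hs0 : 0 < s := hs.1
    have hmem : (s:ℂ) * z ∈ ball (0:ℂ) 1 := hmemIcc z hz s ⟨le_of_lt hs0, hs.2⟩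
    have h1 : ‖ω ((s:ℂ) * z)‖ ≤ s * ‖z‖ := by
      have := hkey _ hmem
      rwa [norm_mul, Complex.norm_real, Real.norm_eq_abs, _root_.abs_of_pos hs0] at this
    have h2 : ‖((s ^ β : ℝ) : ℂ)‖ = s ^ β := by
      rw [Complex.norm_real, Real.norm_eq_abs, _root_.abs_of_nonneg (Real.rpow_nonneg hs0.le β)]
    rw [norm_mul, h2]
    calc s ^ β * ‖ω ((s:ℂ) * z)‖ ≤ s ^ β * (s * ‖z‖) :=
          mul_le_mul_of_nonneg_left h1 (Real.rpow_nonneg hs0.le β)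
      _ = ‖z‖ * (s ^ β * s) := by ring
      _ = ‖z‖ * s ^ γ := by
          rw [show s ^ β * s = s ^ γ by
            rw [hβγ, ← Real.rpow_add_one (ne_of_gt hs0) (γ - 1)]; ring_nf]
  have hcontI : ∀ z ∈ ball (0:ℂ) 1,
      ContinuousOn (fun s : ℝ => ((s ^ β : ℝ) : ℂ) * ω ((s:ℂ) * z)) (Set.Ioc (0:ℝ) 1) := by
    intro z hz
    apply ContinuousOn.mul
    · exact Complex.continuous_ofReal.comp_continuousOn
        (fun s hs => (Real.continuousAt_rpow_const s β (Or.inl (ne_of_gt hs.1))).continuousWithinAt)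
    · exact (hcontω z hz).mono Set.Ioc_subset_Icc_self
  have hIint : ∀ z ∈ ball (0:ℂ) 1,
      IntervalIntegrable (fun s : ℝ => ((s ^ β : ℝ) : ℂ) * ω ((s:ℂ) * z))
        MeasureTheory.volume 0 1 := by
    intro z hz
    apply IntervalIntegrable.mono_fun
      ((continuous_const.mul (Real.continuous_rpow_const (le_of_lt hγpos))).intervalIntegrable 0 1
        : IntervalIntegrable (fun s : ℝ => ‖z‖ * s ^ γ) MeasureTheory.volume 0 1)
    · rw [Set.uIoc_of_le (zero_le_one : (0:ℝ) ≤ 1)]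
      exact (hcontI z hz).aestronglyMeasurable measurableSet_Ioc
    · rw [Set.uIoc_of_le (zero_le_one : (0:ℝ) ≤ 1)]
      filter_upwards [MeasureTheory.ae_restrict_mem measurableSet_Ioc] with s hs
      calc ‖((s ^ β : ℝ) : ℂ) * ω ((s:ℂ) * z)‖ ≤ ‖z‖ * s ^ γ := hnorm_le z hz s hs
        _ ≤ ‖(‖z‖ * s ^ γ)‖ := le_abs_self _
  -- the integral representation
  have hrep : ∀ z ∈ ball (0:ℂ) 1,
      f z = z * (1 + ((2 - (α:ℂ)) / (1 - (α:ℂ))) *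
        ∫ s in (0:ℝ)..1, ((s ^ β : ℝ) : ℂ) * ω ((s:ℂ) * z)) := by
    intro z hz
    set F : ℝ → ℂ := fun s => ((s ^ γ : ℝ) : ℂ) * (g ((s:ℂ) * z) - 1) with hFdef
    set G : ℝ → ℂ := fun s =>
      ((s ^ β : ℝ) : ℂ) * (((2 - (α:ℂ)) / (1 - (α:ℂ))) * ω ((s:ℂ) * z)) with hGdef
    have hcontF : ContinuousOn F (Set.Icc (0:ℝ) 1) := by
      apply ContinuousOn.mul
      · exact Complex.continuous_ofReal.comp_continuousOn
          (fun s _ => (Real.continuousAt_rpow_const s γ (Or.inr hγpos.le)).continuousWithinAt)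
      · exact ((hg.continuousOn.comp
          ((Complex.continuous_ofReal.mul continuous_const).continuousOn)
          (hmemIcc z hz)).sub continuousOn_const)
    have hGint : IntervalIntegrable G MeasureTheory.volume 0 1 := by
      have h := (hIint z hz).const_mul ((2 - (α:ℂ)) / (1 - (α:ℂ)))
      apply h.congr
      intro s _
      rw [hGdef]; ring
    have hderivF : ∀ s ∈ Set.Ioo (0:ℝ) 1, HasDerivAt F (G s) s := by
      intro s hs
      obtain ⟨hs0, hs1⟩ := hs
      have hsz : (s:ℂ) * z ∈ ball (0:ℂ) 1 := hmemIcc z hz s ⟨hs0.le, hs1.le⟩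
      have hgd : HasDerivAt g (deriv g ((s:ℂ) * z)) ((s:ℂ) * z) :=
        (hg.differentiableAt (isOpen_ball.mem_nhds hsz)).hasDerivAt
      have hlin : HasDerivAt (fun t : ℝ => (t:ℂ) * z) z s := by
        simpa using (Complex.ofRealCLM.hasDerivAt (x := s)).mul_const z
      have hcomp : HasDerivAt (fun t : ℝ => g ((t:ℂ) * z))
          (z * deriv g ((s:ℂ) * z)) s := by
        simpa [Function.comp_def, smul_eq_mul, mul_comm] using HasDerivAt.scomp s hgd hlin
      have hrp : HasDerivAt (fun t : ℝ => t ^ γ) (γ * s ^ (γ - 1)) s :=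
        Real.hasDerivAt_rpow_const (Or.inl (ne_of_gt hs0))
      have hrpC : HasDerivAt (fun t : ℝ => ((t ^ γ : ℝ) : ℂ))
          ((γ * s ^ (γ - 1) : ℝ) : ℂ) s := hrp.ofReal_comp
      have hprod : HasDerivAt F
          (((γ * s ^ (γ - 1) : ℝ) : ℂ) * (g ((s:ℂ) * z) - 1) +
            ((s ^ γ : ℝ) : ℂ) * (z * deriv g ((s:ℂ) * z))) s :=
        hrpC.mul (hcomp.sub_const 1)
      convert hprod using 1
      -- algebraic identity
      have hzg : (s:ℂ) * (z * deriv g ((s:ℂ) * z))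
          = deriv f ((s:ℂ) * z) - g ((s:ℂ) * z) := by
        rw [← mul_assoc]
        linear_combination (hderivf _ hsz).symm
      have hsplit : ((s ^ γ : ℝ) : ℂ) = ((s ^ (γ - 1) : ℝ) : ℂ) * (s:ℂ) := by
        rw [show γ = γ - 1 + 1 by ring, Real.rpow_add_one (ne_of_gt hs0)]
        push_cast
        ring
      have hcast1 : ((γ * s ^ (γ - 1) : ℝ) : ℂ) = ((γ:ℝ):ℂ) * ((s ^ (γ - 1) : ℝ) : ℂ) := by
        push_cast; ring
      have hode := hODE ((s:ℂ) * z)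
      rw [hGdef, hβγ, hsplit, hcast1, hγc]
      show ((s ^ (γ-1) : ℝ) : ℂ) * ((2 - (α:ℂ)) / (1 - (α:ℂ)) * ω ((s:ℂ) * z)) = _
      rw [hωdef]
      simp only
      linear_combination (norm := skip) (-((s ^ (γ-1) : ℝ) : ℂ)) * hzg
      field_simp
      ring
    have hFTC :=
      intervalIntegral.integral_eq_sub_of_hasDeriv_right_of_le zero_le_one hcontF
        (fun s hs => (hderivF s hs).hasDerivWithinAt) hGint
    have hF1 : F 1 = g z - 1 := by
      rw [hFdef]; simp [Real.one_rpow]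
    have hF0 : F 0 = 0 := by
      rw [hFdef]; simp [Real.zero_rpow hγpos.ne']
    have hint : (∫ s in (0:ℝ)..1, G s)
        = ((2 - (α:ℂ)) / (1 - (α:ℂ))) *
          ∫ s in (0:ℝ)..1, ((s ^ β : ℝ) : ℂ) * ω ((s:ℂ) * z) := by
      rw [← intervalIntegral.integral_const_mul]
      apply intervalIntegral.integral_congr
      intro s _
      rw [hGdef]; ring
    have hgz : g z = 1 + ((2 - (α:ℂ)) / (1 - (α:ℂ))) *
        ∫ s in (0:ℝ)..1, ((s ^ β : ℝ) : ℂ) * ω ((s:ℂ) * z) := by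
      rw [← hint, hFTC, hF1, hF0]; ring
    rw [hfg z, hgz]
  -- the norm bound
  have hbnd : ∀ z ∈ ball (0:ℂ) 1, z ≠ 0 → ‖f z / z - 1‖ ≤ 1 := by
    intro z hz hzne
    have h1 : f z / z - 1 = ((2 - (α:ℂ)) / (1 - (α:ℂ))) *
        ∫ s in (0:ℝ)..1, ((s ^ β : ℝ) : ℂ) * ω ((s:ℂ) * z) := by
      rw [hrep z hz]
      field_simp
      ring
    rw [h1, norm_mul]
    have hCn : ‖(2 - (α:ℂ)) / (1 - (α:ℂ))‖ = (2 - α) / (1 - α) := by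
      rw [show (2 - (α:ℂ)) / (1 - (α:ℂ)) = (((2 - α) / (1 - α) : ℝ) : ℂ) by push_cast; ring,
        Complex.norm_real, Real.norm_eq_abs, _root_.abs_of_pos (by positivity)]
    rw [hCn]
    have hInorm : ‖∫ s in (0:ℝ)..1, ((s ^ β : ℝ) : ℂ) * ω ((s:ℂ) * z)‖
        ≤ ‖z‖ * (1 / (γ + 1)) := by
      have h := intervalIntegral.norm_integral_le_abs_of_norm_le
        (f := fun s : ℝ => ((s ^ β : ℝ) : ℂ) * ω ((s:ℂ) * z))
        (g := fun s : ℝ => ‖z‖ * s ^ γ)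
        (μ := MeasureTheory.volume) (a := 0) (b := 1)
        ?_ ((continuous_const.mul (Real.continuous_rpow_const hγpos.le)).intervalIntegrable 0 1)
      · calc ‖∫ s in (0:ℝ)..1, ((s ^ β : ℝ) : ℂ) * ω ((s:ℂ) * z)‖
            ≤ |∫ s in (0:ℝ)..1, ‖z‖ * s ^ γ| := h
          _ = ‖z‖ * (1 / (γ + 1)) := by
              rw [intervalIntegral.integral_const_mul, hsγval, _root_.abs_of_nonneg (by positivity)]
      · rw [Set.uIoc_of_le (zero_le_one : (0:ℝ) ≤ 1)]
        filter_upwards [MeasureTheory.ae_restrict_mem measurableSet_Ioc] with s hs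
        exact hnorm_le z hz s hs
    have hc1 : (2 - α) / (1 - α) * (1 / (γ + 1)) = 1 := by
      rw [hγdef]; field_simp; ring
    calc (2 - α) / (1 - α) * ‖∫ s in (0:ℝ)..1, ((s ^ β : ℝ) : ℂ) * ω ((s:ℂ) * z)‖
        ≤ (2 - α) / (1 - α) * (‖z‖ * (1 / (γ + 1))) :=
          mul_le_mul_of_nonneg_left hInorm (by positivity)
      _ = ‖z‖ * ((2 - α) / (1 - α) * (1 / (γ + 1))) := by ring
      _ = ‖z‖ := by rw [hc1, mul_one]
      _ ≤ 1 := le_of_lt (mem_ball_zero_iff.mp hz)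
  exact ⟨ω, hωdiff, hω0, hωball, hrep, hbnd⟩
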